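/- Paraconsistency and nonmonotonicity of four-valued minimal entailment with 𝓘 = {b, n}: for distinct atoms p and q and Γ = {p, ¬(p∧¬q)}, it holds that (i) Γ ⊨^{b,n}_F q, and (ii) Γ ∪ {¬q} ⊭^{b,n}_F q; in particular, ⊨^{b,n}_F is nonmonotonic. -/
import Mathlib


/-- Truth values of the four-valued logic F: f, n, b, t, where in the truth
order f is least, t is greatest, and n, b are incomparable. -/
inductive V4 : Type
  | f | n | b | t
deriving DecidableEq, Repr

namespace V4

/-- Negation: f ↦ t, t ↦ f, and n, b are fixed. -/
def negv : V4 → V4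
  | .f => .t
  | .t => .f
  | .n => .n
  | .b => .b

/-- Conjunction: the meet with respect to the truth order (f least, t
greatest, n and b incomparable, so the meet of n and b is f). -/
def conjv : V4 → V4 → V4
  | .t, y => y
  | .f, _ => .f
  | .n, .t => .n
  | .n, .n => .n
  | .n, .b => .f
  | .n, .f => .f
  | .b, .t => .b
  | .b, .b => .b
  | .b, .n => .f
  | .b, .f => .f

/-- Implication: `x ⊃ y` is `y` if `x` is designated (b or t), and `t`
otherwise. -/
def impv : V4 → V4 → V4
  | .b, y => y
  | .t, y => y
  | .f, _ => .t
  | .n, _ => .t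

end V4

/-- Formulas of the four-valued logic F, with atoms indexed by ℕ, the
constants B and N, negation, conjunction, and implication. -/
inductive FForm : Type
  | atom : ℕ → FForm
  | bb : FForm
  | nn : FForm
  | neg : FForm → FForm
  | conj : FForm → FForm → FForm
  | imp : FForm → FForm → FForm
deriving DecidableEq

namespace FForm

/-- The valuation of F extending an interpretation `I : ℕ → V4`. -/
def val (I : ℕ → V4) : FForm → V4
  | atom p => I p
  | bb => .b
  | nn => .n
  | neg φ => (φ.val I).negv
  | conj φ ψ => (φ.val I).conjv (ψ.val I)
  | imp φ ψ => (φ.val I).impv (ψ.val I)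

/-- `I` is an F-model of `φ`: `v_I(φ)` is designated, i.e. b or t. -/
def IsModel (I : ℕ → V4) (φ : FForm) : Prop := φ.val I = .b ∨ φ.val I = .t

/-- `I` is an F-model of the theory `Γ`. -/
def IsModelSet (I : ℕ → V4) (Γ : Set FForm) : Prop := ∀ φ ∈ Γ, IsModel I φ

end FForm

/-- `Γ ⊨_F Δ`: every F-model of `Γ` is an F-model of some member of `Δ`. -/
def FEntails (Γ Δ : Set FForm) : Prop :=
  ∀ I, FForm.IsModelSet I Γ → ∃ δ ∈ Δ, FForm.IsModel I δ

/-- `I` is an F-model of `Γ` that is most consistent relative to `𝓘 ⊆ V4`: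
no F-model `J` of `Γ` makes a strictly smaller set of atoms take a value
in `𝓘`. -/
def FMostConsistentModel (𝓘 : Set V4) (I : ℕ → V4) (Γ : Set FForm) : Prop :=
  FForm.IsModelSet I Γ ∧
    ¬ ∃ J : ℕ → V4, FForm.IsModelSet J Γ ∧ {p : ℕ | J p ∈ 𝓘} ⊂ {p : ℕ | I p ∈ 𝓘}

/-- `Γ ⊨^𝓘_F Δ`: every F-model of `Γ` most consistent relative to `𝓘` is an
F-model of some member of `Δ`. -/
def FMinEntails (𝓘 : Set V4) (Γ Δ : Set FForm) : Prop :=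
  ∀ I, FMostConsistentModel 𝓘 I Γ → ∃ δ ∈ Δ, FForm.IsModel I δ

/-- Paraconsistency and nonmonotonicity of four-valued minimal entailment with
`𝓘 = {b, n}`: for distinct atoms `p`, `q` and `Γ = {p, ¬(p ∧ ¬q)}`,
(i) `Γ ⊨^{b,n}_F q`, and (ii) `Γ ∪ {¬q} ⊭^{b,n}_F q`. -/
theorem F_paraconsistent_nonmonotonic_bn (p q : ℕ) (hpq : p ≠ q) :
    FMinEntails {V4.b, V4.n}
        {FForm.atom p, FForm.neg (FForm.conj (FForm.atom p) (FForm.neg (FForm.atom q)))}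
        {FForm.atom q} ∧
    ¬ FMinEntails {V4.b, V4.n}
        ({FForm.atom p, FForm.neg (FForm.conj (FForm.atom p) (FForm.neg (FForm.atom q)))}
          ∪ {FForm.neg (FForm.atom q)})
        {FForm.atom q} := by

  constructor
  · -- (i)
    intro I hI
    refine ⟨FForm.atom q, rfl, ?_⟩
    obtain ⟨hmod, hmin⟩ := hI
    have hempty : ∀ r, I r ∉ ({V4.b, V4.n} : Set V4) := by
      by_contra h
      push_neg at h
      obtain ⟨r, hr⟩ := h
      apply hmin
      refine ⟨fun s => if s = p ∨ s = q then .t else .f, ?_, ?_⟩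
      · intro φ hφ
        rcases hφ with rfl | hφ
        · simp [FForm.IsModel, FForm.val]
        · rcases hφ with rfl
          simp [FForm.IsModel, FForm.val, hpq, V4.negv, V4.conjv]
      · have hJe : {s : ℕ | (if s = p ∨ s = q then V4.t else V4.f) ∈ ({V4.b, V4.n} : Set V4)} = ∅ := by
          ext s
          simp only [Set.mem_setOf_eq, Set.mem_empty_iff_false, iff_false]
          split <;> simp [Set.mem_insert_iff, Set.mem_singleton_iff]
        rw [hJe]
        exact Set.empty_ssubset.mpr ⟨r, hr⟩
    have hp : I p = V4.t := by
      have h1 := hmod (FForm.atom p) (Set.mem_insert _ _)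
      have h2 := hempty p
      rcases h1 with h1 | h1
      · exact absurd (by rw [FForm.val] at h1; rw [h1]; left; rfl) h2
      · rw [FForm.val] at h1; exact h1
    have h2 := hmod (FForm.neg (FForm.conj (FForm.atom p) (FForm.neg (FForm.atom q))))
      (Set.mem_insert_of_mem _ rfl)
    have hq2 := hempty q
    cases hq : I q with
    | f => exfalso
           simp [FForm.IsModel, FForm.val, hp, hq, V4.negv, V4.conjv] at h2
    | n => exact absurd (by rw [hq]; right; rfl) hq2
    | b => exact absurd (by rw [hq]; left; rfl) hq2
    | t => simp [FForm.IsModel, FForm.val, hq]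
  · -- (ii)
    intro h
    set I : ℕ → V4 := fun s => if s = p then V4.b else V4.f with hIdef
    have hIp : I p = V4.b := by simp [hIdef]
    have hIq : I q = V4.f := by simp [hIdef, (Ne.symm hpq)]
    have hImod : FForm.IsModelSet I
        ({FForm.atom p, FForm.neg (FForm.conj (FForm.atom p) (FForm.neg (FForm.atom q)))}
          ∪ {FForm.neg (FForm.atom q)}) := by
      intro φ hφ
      rcases hφ with (rfl | rfl) | rfl
      · simp [FForm.IsModel, FForm.val, hIp]
      · simp [FForm.IsModel, FForm.val, hIp, hIq, V4.negv, V4.conjv]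
      · simp [FForm.IsModel, FForm.val, hIq, V4.negv]
    have hIset : {s : ℕ | I s ∈ ({V4.b, V4.n} : Set V4)} = {p} := by
      ext s
      simp only [Set.mem_setOf_eq, Set.mem_singleton_iff, hIdef]
      split
      · next hs => simp [hs]
      · next hs => simp [hs, Set.mem_insert_iff, Set.mem_singleton_iff]
    have hmc : FMostConsistentModel {V4.b, V4.n} I
        ({FForm.atom p, FForm.neg (FForm.conj (FForm.atom p) (FForm.neg (FForm.atom q)))}
          ∪ {FForm.neg (FForm.atom q)}) := by
      refine ⟨hImod, ?_⟩
      rintro ⟨J, hJmod, hss⟩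
      rw [hIset] at hss
      obtain ⟨hsub, hne⟩ := hss
      have hpnot : p ∉ {s : ℕ | J s ∈ ({V4.b, V4.n} : Set V4)} :=
        fun hp' => hne (Set.singleton_subset_iff.mpr hp')
      have hJempty : ∀ s, J s ∉ ({V4.b, V4.n} : Set V4) := by
        intro s hs
        have := hsub hs
        rcases this with rfl
        exact hpnot hs
      have hJp : J p = V4.t := by
        have h1 := hJmod (FForm.atom p) (Or.inl (Set.mem_insert _ _))
        have h2 := hJempty p
        rcases h1 with h1 | h1
        · exact absurd (by rw [FForm.val] at h1; rw [h1]; left; rfl) h2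
        · rw [FForm.val] at h1; exact h1
      have hJq : J q = V4.f := by
        have h1 := hJmod (FForm.neg (FForm.atom q)) (Or.inr rfl)
        have h2 := hJempty q
        cases hq' : J q with
        | f => rfl
        | n => exact absurd (by rw [hq']; right; rfl) h2
        | b => exact absurd (by rw [hq']; left; rfl) h2
        | t => exfalso; simp [FForm.IsModel, FForm.val, hq', V4.negv] at h1
      have h3 := hJmod (FForm.neg (FForm.conj (FForm.atom p) (FForm.neg (FForm.atom q))))
        (Or.inl (Set.mem_insert_of_mem _ rfl))
      simp [FForm.IsModel, FForm.val, hJp, hJq, V4.negv, V4.conjv] at h3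
    obtain ⟨δ, hδ, hδm⟩ := h I hmc
    rcases hδ with rfl
    simp [FForm.IsModel, FForm.val, hIq] at hδm
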